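/- Let P be a nonnegative 2×2×2 tensor satisfying the nine supermodularity inequalities for the identity permutations. If U_{12} = 0 and U_{12}^1 = 0 and U_{12}^2 = 0 (notation as below), then either the flattening Flat_{1|23}(P), i.e. the 2×4 matrix with rows (p_{111},p_{112},p_{121},p_{122}) and (p_{211},p_{212},p_{221},p_{222}), has rank at most 1, or the flattening Flat_{2|13}(P), i.e. the 2×4 matrix with rows (p_{111},p_{112},p_{211},p_{212}) and (p_{121},p_{122},p_{221},p_{222}), has rank at most 1. -/
import Mathlib


lemma rank_vecMulVec_le (u : Fin 2 → ℝ) (v : Fin 4 → ℝ) :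
    (Matrix.vecMulVec u v).rank ≤ 1 := by
  rw [Matrix.vecMulVec_eq (Fin 1)]
  calc (Matrix.replicateCol (Fin 1) u * Matrix.replicateRow (Fin 1) v).rank
      ≤ (Matrix.replicateCol (Fin 1) u).rank := Matrix.rank_mul_le_left _ _
    _ ≤ 1 := by simpa using Matrix.rank_le_card_width (Matrix.replicateCol (Fin 1) u)

lemma rank_le_one_of_minors (a b c d e f g h : ℝ)
    (m12 : a*f = b*e) (m13 : a*g = c*e) (m14 : a*h = d*e)
    (m23 : b*g = c*f) (m24 : b*h = d*f) (m34 : c*h = d*g) :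
    (!![a,b,c,d; e,f,g,h] : Matrix (Fin 2) (Fin 4) ℝ).rank ≤ 1 := by
  have key : ∃ u v, (!![a,b,c,d; e,f,g,h] : Matrix (Fin 2) (Fin 4) ℝ)
      = Matrix.vecMulVec u v := by
    by_cases ha : a ≠ 0
    · exact ⟨![1, e/a], ![a,b,c,d], by
        ext i j; fin_cases i <;> fin_cases j <;>
          simp [Matrix.vecMulVec_apply] <;> field_simp <;> linarith⟩
    by_cases hb : b ≠ 0
    · exact ⟨![1, f/b], ![a,b,c,d], by
        ext i j; fin_cases i <;> fin_cases j <;>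
          simp [Matrix.vecMulVec_apply] <;> field_simp <;> linarith⟩
    by_cases hc : c ≠ 0
    · exact ⟨![1, g/c], ![a,b,c,d], by
        ext i j; fin_cases i <;> fin_cases j <;>
          simp [Matrix.vecMulVec_apply] <;> field_simp <;> linarith⟩
    by_cases hd : d ≠ 0
    · exact ⟨![1, h/d], ![a,b,c,d], by
        ext i j; fin_cases i <;> fin_cases j <;>
          simp [Matrix.vecMulVec_apply] <;> field_simp <;> linarith⟩
    push_neg at ha hb hc hd
    exact ⟨![0, 1], ![e,f,g,h], by
      ext i j; fin_cases i <;> fin_cases j <;>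
        simp [Matrix.vecMulVec_apply, ha, hb, hc, hd]⟩
  obtain ⟨u, v, huv⟩ := key
  rw [huv]; exact rank_vecMulVec_le u v

lemma key_lemma
    (p111 p112 p121 p122 p211 p212 p221 p222 : ℝ)
    (hnn : 0 ≤ p111 ∧ 0 ≤ p112 ∧ 0 ≤ p121 ∧ 0 ≤ p122 ∧
           0 ≤ p211 ∧ 0 ≤ p212 ∧ 0 ≤ p221 ∧ 0 ≤ p222)
    (hU : (p111 + p112) * (p221 + p222) - (p121 + p122) * (p211 + p212) = 0)
    (hU1 : p111 * p221 - p121 * p211 = 0)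
    (hU2 : p112 * p222 - p122 * p212 = 0)
    (hAD : p111 * p222 = p122 * p211)
    (hBC : p112 * p221 = p121 * p212) :
    (!![p111, p112, p121, p122; p211, p212, p221, p222] :
        Matrix (Fin 2) (Fin 4) ℝ).rank ≤ 1 ∨
    (!![p111, p112, p211, p212; p121, p122, p221, p222] :
        Matrix (Fin 2) (Fin 4) ℝ).rank ≤ 1 := by
  obtain ⟨n1, n2, n3, n4, n5, n6, n7, n8⟩ := hnn
  by_cases hc1 : p221 = 0 ∧ p222 = 0
  · obtain ⟨z1, z2⟩ := hc1
    by_cases hc2 : p211 = 0 ∧ p212 = 0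
    · obtain ⟨z3, z4⟩ := hc2
      left
      apply rank_le_one_of_minors <;> (subst z1 z2 z3 z4; ring)
    · right
      -- p211 + p212 > 0, so p121 = p122 = 0
      have hpos : 0 < p211 + p212 := by
        rcases (not_and_or.mp hc2) with h | h
        · cases' lt_or_eq_of_le n5 with h5 h5
          · linarith
          · exact absurd h5.symm h
        · cases' lt_or_eq_of_le n6 with h6 h6
          · linarith
          · exact absurd h6.symm h
      have hsum : p121 + p122 = 0 := by
        have : (p121 + p122) * (p211 + p212) = 0 := by
          subst z1 z2; linarith [hU]
        rcases mul_eq_zero.mp this with h | h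
        · exact h
        · linarith
      have e121 : p121 = 0 := by linarith
      have e122 : p122 = 0 := by linarith
      apply rank_le_one_of_minors <;> (subst z1 z2 e121 e122; ring)
  · by_cases hc2 : p211 = 0 ∧ p212 = 0
    · obtain ⟨z3, z4⟩ := hc2
      right
      have hpos : 0 < p221 + p222 := by
        rcases (not_and_or.mp hc1) with h | h
        · cases' lt_or_eq_of_le n7 with h7 h7
          · linarith
          · exact absurd h7.symm h
        · cases' lt_or_eq_of_le n8 with h8 h8
          · linarith
          · exact absurd h8.symm h
      have hsum : p111 + p112 = 0 := by
        have : (p111 + p112) * (p221 + p222) = 0 := by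
          subst z3 z4; linarith [hU]
        rcases mul_eq_zero.mp this with h | h
        · exact h
        · linarith
      have e111 : p111 = 0 := by linarith
      have e112 : p112 = 0 := by linarith
      apply rank_le_one_of_minors <;> (subst z3 z4 e111 e112; ring)
    · left
      -- generic case: all six minors of Flat1 vanish
      have m12 : p111 * p212 = p112 * p211 := by
        have e1 : (p111 * p212 - p112 * p211) * p221 = 0 := by
          linear_combination p212 * hU1 - p211 * hBC
        have e2 : (p111 * p212 - p112 * p211) * p222 = 0 := by
          linear_combination p212 * hAD - p211 * hU2
        rcases (not_and_or.mp hc1) with h | h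
        · have := mul_eq_zero.mp e1
          rcases this with h' | h'
          · linarith
          · exact absurd h' h
        · have := mul_eq_zero.mp e2
          rcases this with h' | h'
          · linarith
          · exact absurd h' h
      have m34 : p121 * p222 = p122 * p221 := by
        have e1 : (p121 * p222 - p122 * p221) * p211 = 0 := by
          linear_combination -p222 * hU1 + p221 * hAD
        have e2 : (p121 * p222 - p122 * p221) * p212 = 0 := by
          linear_combination -p222 * hBC + p221 * hU2
        rcases (not_and_or.mp hc2) with h | h
        · have := mul_eq_zero.mp e1
          rcases this with h' | h'
          · linarith
          · exact absurd h' h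
        · have := mul_eq_zero.mp e2
          rcases this with h' | h'
          · linarith
          · exact absurd h' h
      exact rank_le_one_of_minors _ _ _ _ _ _ _ _
        m12 (by linarith [hU1]) hAD hBC (by linarith [hU2]) m34


/-- if a nonnegative supermodular 2×2×2 tensor has
U12 = U12^1 = U12^2 = 0, then one of the two flattenings Flat_{1|23} or
Flat_{2|13} has rank at most 1. -/
theorem stmt_10
    (p111 p112 p121 p122 p211 p212 p221 p222 : ℝ)
    (hnn : 0 ≤ p111 ∧ 0 ≤ p112 ∧ 0 ≤ p121 ∧ 0 ≤ p122 ∧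
           0 ≤ p211 ∧ 0 ≤ p212 ∧ 0 ≤ p221 ∧ 0 ≤ p222)
    (h1 : p111 * p222 ≥ p112 * p221)
    (h2 : p111 * p222 ≥ p121 * p212)
    (h3 : p111 * p222 ≥ p211 * p122)
    (h4 : p112 * p222 ≥ p122 * p212)
    (h5 : p121 * p222 ≥ p122 * p221)
    (h6 : p211 * p222 ≥ p212 * p221)
    (h7 : p111 * p122 ≥ p112 * p121)
    (h8 : p111 * p212 ≥ p112 * p211)
    (h9 : p111 * p221 ≥ p121 * p211)
    (hU : (p111 + p112) * (p221 + p222) - (p121 + p122) * (p211 + p212) = 0)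
    (hU1 : p111 * p221 - p121 * p211 = 0)
    (hU2 : p112 * p222 - p122 * p212 = 0) :
    (!![p111, p112, p121, p122; p211, p212, p221, p222] :
        Matrix (Fin 2) (Fin 4) ℝ).rank ≤ 1 ∨
    (!![p111, p112, p211, p212; p121, p122, p221, p222] :
        Matrix (Fin 2) (Fin 4) ℝ).rank ≤ 1 := by
  -- A = p111 p222, B = p112 p221, C = p121 p212, D = p122 p211
  have hsum : p111 * p222 + p112 * p221 = p121 * p212 + p122 * p211 := by
    linear_combination hU - hU1 - hU2
  have hprod : (p111 * p222) * (p112 * p221) = (p121 * p212) * (p122 * p211) := by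
    linear_combination p112 * p222 * hU1 + p121 * p211 * hU2
  have hquad : (p111 * p222 - p121 * p212) * (p111 * p222 - p122 * p211) = 0 := by
    linear_combination (p111 * p222) * hsum - hprod
  obtain ⟨n1, n2, n3, n4, n5, n6, n7, n8⟩ := hnn
  rcases mul_eq_zero.mp hquad with hAC | hAD
  · -- A = C, B = D : apply key_lemma to the swapped tensor
    have hBD : p112 * p221 = p122 * p211 := by linarith
    have := key_lemma p111 p112 p211 p212 p121 p122 p221 p222
      ⟨n1, n2, n5, n6, n3, n4, n7, n8⟩
      (by linarith [hU]) (by linarith [hU1]) (by linarith [hU2])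
      (by linarith) (by linarith)
    exact this.symm
  · have hBC : p112 * p221 = p121 * p212 := by linarith
    exact key_lemma p111 p112 p121 p122 p211 p212 p221 p222
      ⟨n1, n2, n3, n4, n5, n6, n7, n8⟩ hU hU1 hU2 (by linarith) hBC
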